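/- For fixed $\varepsilon > 0$, the function $B_{\varepsilon}(\alpha) = \Phi\left(\sqrt{\varepsilon/2}\left(\frac{1}{\alpha} - \alpha\right)\right) - e^{\varepsilon}\Phi\left(-\sqrt{\varepsilon/2}\left(\frac{1}{\alpha} + \alpha\right)\right)$ is monotonically decreasing on $\alpha \in (0, \infty)$. -/

import Mathlib

open MeasureTheory

/-- The standard Gaussian cumulative distribution function. -/
noncomputable def Phi (t : ℝ) : ℝ :=
  ∫ y in Set.Iic t, Real.exp (-y ^ 2 / 2) / Real.sqrt (2 * Real.pi)

/-- The standard Gaussian density. -/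
noncomputable def gaussPDF (t : ℝ) : ℝ :=
  Real.exp (-t ^ 2 / 2) / Real.sqrt (2 * Real.pi)

lemma gaussPDF_nonneg (t : ℝ) : 0 ≤ gaussPDF t :=
  div_nonneg (Real.exp_nonneg _) (Real.sqrt_nonneg _)

lemma gaussPDF_integrable : Integrable gaussPDF := by
  have h : Integrable (fun y : ℝ => Real.exp (-(1/2) * y ^ 2)) :=
    integrable_exp_neg_mul_sq (by norm_num)
  have : gaussPDF = fun y => Real.exp (-(1/2) * y ^ 2) * (Real.sqrt (2 * Real.pi))⁻¹ := by
    funext y; unfold gaussPDF; rw [div_eq_mul_inv]; ring_nf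
  rw [this]
  exact h.mul_const _

lemma gaussPDF_continuous : Continuous gaussPDF := by
  unfold gaussPDF
  fun_prop

lemma Phi_hasDerivAt (t : ℝ) : HasDerivAt Phi (gaussPDF t) t := by
  have hint : ∀ s : ℝ, IntegrableOn gaussPDF (Set.Iic s) := fun s =>
    gaussPDF_integrable.integrableOn
  have key : ∀ s : ℝ, Phi s = Phi 0 + ∫ x in (0:ℝ)..s, gaussPDF x := by
    intro s
    have := intervalIntegral.integral_Iic_sub_Iic (hint 0) (hint s)
    simp only [Phi, gaussPDF] at this ⊢
    linarith [this]
  have hF : HasDerivAt (fun s => Phi 0 + ∫ x in (0:ℝ)..s, gaussPDF x) (gaussPDF t) t := by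
    refine HasDerivAt.const_add _ ?_
    refine intervalIntegral.integral_hasDerivAt_right
      (gaussPDF_integrable.intervalIntegrable) ?_ gaussPDF_continuous.continuousAt
    exact gaussPDF_continuous.stronglyMeasurable.stronglyMeasurableAtFilter
  have : Phi = fun s => Phi 0 + ∫ x in (0:ℝ)..s, gaussPDF x := funext key
  rw [this]
  exact hF

theorem B_antitone (ε : ℝ) (hε : 0 < ε) :
    AntitoneOn (fun α : ℝ =>
        Phi (Real.sqrt (ε / 2) * (1 / α - α)) -
          Real.exp ε * Phi (-(Real.sqrt (ε / 2) * (1 / α + α))))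
      (Set.Ioi (0 : ℝ)) := by
  set c := Real.sqrt (ε / 2) with hc
  have hc2 : c ^ 2 = ε / 2 := Real.sq_sqrt (by positivity)
  have hcpos : 0 < c := Real.sqrt_pos.mpr (by positivity)
  -- derivative of the whole function at α > 0
  have hderiv : ∀ α : ℝ, 0 < α →
      HasDerivAt (fun α : ℝ =>
        Phi (c * (1 / α - α)) - Real.exp ε * Phi (-(c * (1 / α + α))))
        (gaussPDF (c * (1 / α - α)) * (-2 * c / α ^ 2)) α := by
    intro α hα
    have hαne : α ≠ 0 := ne_of_gt hα
    have h1 : HasDerivAt (fun α : ℝ => c * (1 / α - α)) (c * (-(α ^ 2)⁻¹ - 1)) α := by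
      have := ((hasDerivAt_inv hαne).sub (hasDerivAt_id α)).const_mul c
      simpa [one_div] using this
    have h2 : HasDerivAt (fun α : ℝ => -(c * (1 / α + α))) (-(c * (-(α ^ 2)⁻¹ + 1))) α := by
      have := (((hasDerivAt_inv hαne).add (hasDerivAt_id α)).const_mul c).neg
      exact this.congr_of_eventuallyEq (Filter.Eventually.of_forall fun x => by simp [one_div])
    have H1 := (Phi_hasDerivAt (c * (1 / α - α))).comp α h1
    have H2 := ((Phi_hasDerivAt (-(c * (1 / α + α)))).comp α h2).const_mul (Real.exp ε)
    have H := H1.sub H2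
    refine H.congr_deriv ?_
    -- key identity: exp ε * gaussPDF (-(c*(1/α+α))) = gaussPDF (c*(1/α-α))
    have hsq : (-(c * (1 / α + α))) ^ 2 = (c * (1 / α - α)) ^ 2 + 2 * ε := by
      have : (-(c * (1 / α + α))) ^ 2 - (c * (1 / α - α)) ^ 2 = 4 * c ^ 2 := by
        field_simp
        ring
      rw [hc2] at this
      linarith
    have hkey : Real.exp ε * gaussPDF (-(c * (1 / α + α))) = gaussPDF (c * (1 / α - α)) := by
      unfold gaussPDF
      rw [hsq, mul_div_assoc', ← Real.exp_add]
      congr 1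
      ring
    rw [show Real.exp ε * (gaussPDF (-(c * (1 / α + α))) * -(c * (-(α ^ 2)⁻¹ + 1)))
        = Real.exp ε * gaussPDF (-(c * (1 / α + α))) * -(c * (-(α ^ 2)⁻¹ + 1)) by ring, hkey]
    field_simp
    ring
  apply antitoneOn_of_deriv_nonpos (convex_Ioi 0)
  · exact fun α hα => ((hderiv α hα).differentiableAt.continuousAt).continuousWithinAt
  · intro α hα
    rw [interior_Ioi] at hα
    exact (hderiv α hα).differentiableAt.differentiableWithinAt
  · intro α hα
    rw [interior_Ioi] at hα
    rw [(hderiv α hα).deriv]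
    have hαp : (0:ℝ) < α := hα
    have hg := gaussPDF_nonneg (c * (1 / α - α))
    have h2 : (0:ℝ) < α ^ 2 := pow_pos hαp 2
    have hfac : -2 * c / α ^ 2 ≤ 0 := div_nonpos_of_nonpos_of_nonneg (by nlinarith) h2.le
    exact mul_nonpos_of_nonneg_of_nonpos hg hfac
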